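/- arXiv:0906.3380 — 3 statements merged into one kernel-verified Lean document; each statement's English description precedes it below -/
import Mathlib

section
/- Let n be a positive integer with φ(rad(n)) | n, and let w be a positive integer coprime to n with φ(w·rad(n)) | n. Then n = φ(w·rad(n)·n/φ(w·rad(n))). -/
/-- The radical of `n`: the product of the distinct prime factors of `n`. -/
def rad (n : ℕ) : ℕ := ∏ p ∈ n.primeFactors, p

lemma totient_mul_of_primes_dvd (m : ℕ) : ∀ a : ℕ, 0 < a →
    (∀ p : ℕ, p.Prime → p ∣ a → p ∣ m) → Nat.totient (m * a) = Nat.totient m * a := by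
  intro a
  induction a using Nat.strong_induction_on with
  | _ a ih =>
    intro ha hp
    rcases eq_or_lt_of_le (show 1 ≤ a from ha) with h1 | h1
    · simp [← h1]
    · obtain ⟨q, hpf, b, hb⟩ : ∃ q, q.Prime ∧ ∃ b, a = q * b :=
        ⟨a.minFac, Nat.minFac_prime (by omega), a / a.minFac,
          (Nat.mul_div_cancel' a.minFac_dvd).symm⟩
      have h2 : 2 ≤ q := hpf.two_le
      have hb0 : 0 < b := by
        rcases Nat.eq_zero_or_pos b with h | h
        · subst h; simp at hb; omega
        · exact h
      have hblt : b < a := by nlinarith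
      have hpm : q ∣ m := hp _ hpf ⟨b, hb⟩
      have hstep : Nat.totient (q * (m * b)) = q * Nat.totient (m * b) :=
        Nat.totient_mul_of_prime_of_dvd hpf (Dvd.dvd.mul_right hpm b)
      have hrec : Nat.totient (m * b) = Nat.totient m * b :=
        ih b hblt hb0 (fun p pp pd => hp p pp (hb ▸ pd.mul_left _))
      calc Nat.totient (m * a) = Nat.totient (q * (m * b)) := by rw [hb]; ring_nf
        _ = q * (Nat.totient m * b) := by rw [hstep, hrec]
        _ = Nat.totient m * a := by rw [hb]; ring

theorem totient_preimage_with_cofactor (n w : ℕ) (hn : 0 < n) (hw : 0 < w)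
    (hrad : Nat.totient (rad n) ∣ n)
    (hcop : Nat.Coprime w n)
    (hdvd : Nat.totient (w * rad n) ∣ n) :
    n = Nat.totient (w * rad n * n / Nat.totient (w * rad n)) := by
  set m := w * rad n with hm
  have hradpos : 0 < rad n := Finset.prod_pos fun p hp => (Nat.prime_of_mem_primeFactors hp).pos
  have hmpos : 0 < m := Nat.mul_pos hw hradpos
  have htpos : 0 < Nat.totient m := Nat.totient_pos.2 hmpos
  have htn : Nat.totient m ∣ n := hdvd
  have hq : 0 < n / Nat.totient m := Nat.div_pos (Nat.le_of_dvd hn htn) htpos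
  have key : ∀ p : ℕ, p.Prime → p ∣ n / Nat.totient m → p ∣ m := by
    intro p pp pd
    have hpn : p ∣ n := pd.trans (Nat.div_dvd_of_dvd htn)
    have : p ∣ rad n := Finset.dvd_prod_of_mem _ (Nat.mem_primeFactors.2 ⟨pp, hpn, hn.ne'⟩)
    exact this.mul_left w
  rw [Nat.mul_div_assoc m htn, totient_mul_of_primes_dvd m _ hq key,
    Nat.mul_div_cancel' htn]
end

section
/- Let n be a positive integer with φ(rad(n)) | n and let q be a prime not dividing n. If t is any prime occurring in a prime chain starting at q (i.e., there are primes q = t_0, t_1, ..., t_k = t with t_{j+1} ≡ 1 (mod t_j) for all j), then t does not divide n. -/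
/-- `InPrimeChain q t` means there is a finite sequence of primes
`t_0 = q, t_1, ..., t_k = t` with `t_{j+1} ≡ 1 (mod t_j)` for each `j`. -/
def InPrimeChain (q t : ℕ) : Prop :=
  ∃ (k : ℕ) (f : ℕ → ℕ), f 0 = q ∧ f k = t ∧ (∀ j ≤ k, (f j).Prime) ∧
    ∀ j < k, f (j + 1) ≡ 1 [MOD f j]

lemma totient_prod_primes (s : Finset ℕ) (hs : ∀ p ∈ s, p.Prime) :
    Nat.totient (∏ p ∈ s, p) = ∏ p ∈ s, (p - 1) := by
  induction s using Finset.induction with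
  | empty => simp
  | @insert a s' hp ih =>
    rw [Finset.prod_insert hp, Finset.prod_insert hp,
      Nat.totient_mul, Nat.totient_prime (hs a (Finset.mem_insert_self a s')),
      ih (fun p hp' => hs p (Finset.mem_insert_of_mem hp'))]
    · exact Nat.Coprime.prod_right fun q hq =>
        (Nat.coprime_primes (hs a (Finset.mem_insert_self a s'))
          (hs q (Finset.mem_insert_of_mem hq))).mpr (fun h => hp (h ▸ hq))

lemma sub_one_dvd_totient_rad {n p : ℕ} (hn : 0 < n) (hp : p.Prime) (hpn : p ∣ n) :
    (p - 1) ∣ Nat.totient (rad n) := by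
  rw [rad, totient_prod_primes _ (fun q hq => Nat.prime_of_mem_primeFactors hq)]
  exact Finset.dvd_prod_of_mem _ (Nat.mem_primeFactors.mpr ⟨hp, hpn, hn.ne'⟩)

theorem prime_chain_not_dvd (n q t : ℕ) (hn : 0 < n)
    (hrad : Nat.totient (rad n) ∣ n) (hq : q.Prime) (hqn : ¬ q ∣ n)
    (hchain : InPrimeChain q t) : ¬ t ∣ n := by
  obtain ⟨k, f, h0, hk, hprime, hmod⟩ := hchain
  subst h0 hk
  suffices H : ∀ j ≤ k, ¬ f j ∣ n from H k le_rfl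
  intro j hj
  induction j with
  | zero => exact hqn
  | succ j ih =>
    intro hdvd
    have hj' : j < k := hj
    apply ih (le_of_lt hj')
    have h1 : f j ∣ f (j + 1) - 1 := by
      have := (hmod j hj').symm
      exact (Nat.modEq_iff_dvd' (hprime (j+1) hj).one_lt.le).mp this
    exact dvd_trans (h1.trans (sub_one_dvd_totient_rad hn (hprime (j+1) hj) hdvd)) hrad
end

section
/- Let n be a positive integer with φ(rad(n)) | n. Suppose w_1 ≠ w_2 are positive integers coprime to n with φ(w_i·rad(n)) | n for i = 1, 2. Then the integers m_i = w_i·rad(n)·n/φ(w_i·rad(n)) satisfy φ(m_1) = φ(m_2) = n and m_1 ≠ m_2. -/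
lemma totient_mul_self (k : ℕ) (hk : 0 < k) :
    ∀ d : ℕ, (∀ p : ℕ, p.Prime → p ∣ d → p ∣ k) → (k * d).totient = k.totient * d := by
  intro d
  induction d using Nat.strong_induction_on with
  | _ d ih =>
    intro hd
    rcases Nat.eq_zero_or_pos d with rfl | hd0
    · simp
    rcases Nat.eq_or_lt_of_le hd0 with h1 | h2
    · simp [← h1]
    have hp : d.minFac.Prime := Nat.minFac_prime (by omega)
    have hpd : d.minFac ∣ d := Nat.minFac_dvd d
    have hpk : d.minFac ∣ k := hd _ hp hpd
    have hdiv : d / d.minFac < d := Nat.div_lt_self hd0 hp.one_lt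
    have hkd : k * d = d.minFac * (k * (d / d.minFac)) := by
      rw [mul_comm d.minFac, mul_assoc, Nat.div_mul_cancel hpd]
    rw [hkd, Nat.totient_mul_of_prime_of_dvd hp (hpk.mul_right _),
      ih _ hdiv (fun p hp' hdvd => hd p hp' (hdvd.trans (Nat.div_dvd_of_dvd hpd)))]
    rw [mul_comm d.minFac, mul_assoc, Nat.div_mul_cancel hpd]

lemma prime_dvd_rad_of_dvd {p n : ℕ} (hp : p.Prime) (hn : 0 < n) (h : p ∣ n) : p ∣ rad n :=
  Finset.dvd_prod_of_mem _ (Nat.mem_primeFactors.2 ⟨hp, h, hn.ne'⟩)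

theorem distinct_totient_preimages (n w₁ w₂ : ℕ) (hn : 0 < n)
    (hw₁ : 0 < w₁) (hw₂ : 0 < w₂) (hne : w₁ ≠ w₂)
    (hrad : Nat.totient (rad n) ∣ n)
    (hcop₁ : Nat.Coprime w₁ n) (hcop₂ : Nat.Coprime w₂ n)
    (hdvd₁ : Nat.totient (w₁ * rad n) ∣ n) (hdvd₂ : Nat.totient (w₂ * rad n) ∣ n) :
    Nat.totient (w₁ * rad n * n / Nat.totient (w₁ * rad n)) = n ∧
    Nat.totient (w₂ * rad n * n / Nat.totient (w₂ * rad n)) = n ∧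
    w₁ * rad n * n / Nat.totient (w₁ * rad n) ≠
      w₂ * rad n * n / Nat.totient (w₂ * rad n) := by
  have hradn : rad n ∣ n := Nat.prod_primeFactors_dvd n
  have hr0 : 0 < rad n := Nat.pos_of_dvd_of_pos hradn hn
  -- general facts for a w
  have key : ∀ w : ℕ, 0 < w → Nat.Coprime w n → Nat.totient (w * rad n) ∣ n →
      w * rad n * n / Nat.totient (w * rad n) = w * (rad n * (n / Nat.totient (w * rad n))) ∧
      Nat.totient (w * rad n * n / Nat.totient (w * rad n)) = n := by
    intro w hw hcop hdvd
    have hk0 : 0 < w * rad n := Nat.mul_pos hw hr0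
    have ht0 : 0 < Nat.totient (w * rad n) := Nat.totient_pos.2 hk0
    have hform : w * rad n * n / Nat.totient (w * rad n)
        = w * rad n * (n / Nat.totient (w * rad n)) := Nat.mul_div_assoc _ hdvd
    constructor
    · rw [hform, mul_assoc]
    · rw [hform, totient_mul_self _ hk0 _ ?_]
      · rw [Nat.mul_div_cancel' hdvd]
      · intro p hp hpd
        have hpn : p ∣ n := hpd.trans (Nat.div_dvd_of_dvd hdvd)
        exact (prime_dvd_rad_of_dvd hp hn hpn).mul_left w
  obtain ⟨hf₁, ht₁⟩ := key w₁ hw₁ hcop₁ hdvd₁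
  obtain ⟨hf₂, ht₂⟩ := key w₂ hw₂ hcop₂ hdvd₂
  refine ⟨ht₁, ht₂, ?_⟩
  intro heq
  -- coprimality of wᵢ with the other factor
  have hA : ∀ w w' : ℕ, Nat.Coprime w n → Nat.totient (w' * rad n) ∣ n →
      Nat.Coprime w (rad n * (n / Nat.totient (w' * rad n))) := by
    intro w w' hcop hdvd
    exact (hcop.coprime_dvd_right hradn).mul_right
      (hcop.coprime_dvd_right (Nat.div_dvd_of_dvd hdvd))
  rw [hf₁, hf₂] at heq
  have h12 : w₁ ∣ w₂ := (hA w₁ w₂ hcop₁ hdvd₂).dvd_of_dvd_mul_right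
    ⟨rad n * (n / Nat.totient (w₁ * rad n)), heq.symm⟩
  have h21 : w₂ ∣ w₁ := (hA w₂ w₁ hcop₂ hdvd₁).dvd_of_dvd_mul_right
    ⟨rad n * (n / Nat.totient (w₂ * rad n)), heq⟩
  exact hne (Nat.dvd_antisymm h12 h21)
end
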